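/- arXiv:1401.5345 — 2 statements merged into one kernel-verified Lean document; each statement's English description precedes it below -/
import Mathlib

section
/- Let p be a prime, r ≥ 0, and let F(q,N) = ∑_{n=0}^N (q;q)_n ∈ ℤ[q]. Then for every p-th root of unity ζ and all m ≥ (r+1)p, the value of ((q·d/dq)^r F(q,m)) at q = ζ equals the value of ((q·d/dq)^r F(q,(r+1)p-1)) at q = ζ. -/
open Polynomial Finset

private lemma D_sub_iter (r : ℕ) (g h : Polynomial ℂ) :
    (fun g : Polynomial ℂ => X * derivative g)^[r] (g - h) =
      (fun g : Polynomial ℂ => X * derivative g)^[r] g -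
      (fun g : Polynomial ℂ => X * derivative g)^[r] h := by
  induction r generalizing g h with
  | zero => simp
  | succ n ih =>
    rw [Function.iterate_succ_apply, Function.iterate_succ_apply,
      Function.iterate_succ_apply]
    simp only [derivative_sub, mul_sub]
    exact ih _ _

private lemma dvd_D (p s : ℕ) (g : Polynomial ℂ)
    (hg : (1 - X ^ p : Polynomial ℂ) ^ (s + 1) ∣ g) :
    (1 - X ^ p : Polynomial ℂ) ^ s ∣ X * derivative g := by
  obtain ⟨h, rfl⟩ := hg
  rw [derivative_mul, derivative_pow]
  apply Dvd.dvd.mul_left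
  apply dvd_add
  · exact Dvd.dvd.mul_right (Dvd.dvd.mul_right (dvd_mul_left _ _) _) _
  · exact Dvd.dvd.mul_right (pow_dvd_pow _ (Nat.le_succ s)) _

private lemma dvd_D_iter (p : ℕ) : ∀ (r : ℕ) (g : Polynomial ℂ),
    (1 - X ^ p : Polynomial ℂ) ^ (r + 1) ∣ g →
    (1 - X ^ p : Polynomial ℂ) ∣ (fun g : Polynomial ℂ => X * derivative g)^[r] g := by
  intro r
  induction r with
  | zero => intro g hg; simpa using hg
  | succ n ih =>
    intro g hg
    rw [Function.iterate_succ_apply]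
    exact ih _ (dvd_D p (n + 1) g hg)

private lemma prod_dvd (p k : ℕ) (hp : 0 < p) :
    (1 - X ^ p : Polynomial ℂ) ^ k ∣ ∏ i ∈ Finset.range (k * p), (1 - X ^ (i + 1)) := by
  induction k with
  | zero => simp
  | succ n ih =>
    rw [Nat.succ_mul, Finset.prod_range_add, pow_succ]
    apply mul_dvd_mul ih
    have hmem : p - 1 ∈ Finset.range p := by
      simp [Nat.sub_lt hp one_pos]
    have hdvd : (1 - X ^ p : Polynomial ℂ) ∣ 1 - X ^ (n * p + (p - 1) + 1) := by
      have : n * p + (p - 1) + 1 = p * (n + 1) := by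
        rw [add_assoc, Nat.sub_add_cancel hp]; ring
      rw [this]
      have := sub_dvd_pow_sub_pow (1 : Polynomial ℂ) (X ^ p) (n + 1)
      simpa [pow_mul] using this
    exact (hdvd).trans (Finset.dvd_prod_of_mem _ hmem)

/-- For F(q,N) = ∑_{n=0}^N (q;q)_n, any p-th root of unity ζ and m ≥ (r+1)p,
((q d/dq)^r F(q,m))(ζ) = ((q d/dq)^r F(q,(r+1)p-1))(ζ). -/
theorem euler_deriv_truncation (p : ℕ) (hp : p.Prime) (r : ℕ) (ζ : ℂ) (hζ : ζ ^ p = 1)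
    (m : ℕ) (hm : (r + 1) * p ≤ m) :
    (((fun g : Polynomial ℂ => X * derivative g)^[r]
        (∑ n ∈ Finset.range (m + 1), ∏ i ∈ Finset.range n, (1 - X ^ (i + 1)))).eval ζ) =
      (((fun g : Polynomial ℂ => X * derivative g)^[r]
        (∑ n ∈ Finset.range ((r + 1) * p - 1 + 1),
          ∏ i ∈ Finset.range n, (1 - X ^ (i + 1)))).eval ζ) := by
  have hp1 : 0 < p := hp.pos
  have hk : (r + 1) * p - 1 + 1 = (r + 1) * p := by
    have : 0 < (r + 1) * p := Nat.mul_pos (Nat.succ_pos r) hp1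
    omega
  rw [hk]
  rw [sub_eq_zero.symm, ← eval_sub, ← D_sub_iter]
  have hdiff : (1 - X ^ p : Polynomial ℂ) ^ (r + 1) ∣
      (∑ n ∈ Finset.range (m + 1), ∏ i ∈ Finset.range n, (1 - X ^ (i + 1))) -
      (∑ n ∈ Finset.range ((r + 1) * p), ∏ i ∈ Finset.range n, (1 - X ^ (i + 1))) := by
    rw [← Finset.sum_Ico_eq_sub _ (by omega : (r + 1) * p ≤ m + 1)]
    apply Finset.dvd_sum
    intro n hn
    rw [Finset.mem_Ico] at hn
    calc (1 - X ^ p : Polynomial ℂ) ^ (r + 1)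
        ∣ ∏ i ∈ Finset.range ((r + 1) * p), (1 - X ^ (i + 1)) := prod_dvd p (r + 1) hp1
      _ ∣ ∏ i ∈ Finset.range n, (1 - X ^ (i + 1)) :=
          Finset.prod_dvd_prod_of_subset _ _ _ (Finset.range_subset_range.2 hn.1)
  obtain ⟨h, hh⟩ := dvd_D_iter p r _ hdiff
  rw [hh]
  simp [hζ]
end

section
/- Let p be a prime and let ζ be a primitive p-th root of unity in ℂ. Suppose f ∈ ℤ[q] is written as f(q) = ∑_{i=0}^{p-1} q^i φ_i(q^p) with φ_i ∈ ℤ[q], and suppose there exist integers c_λ, indexed by a set Λ ⊆ [0, p-1] of residues of generalized pentagonal numbers mod p containing 0, such that for every p-th root of unity ω (including ω = 1), f(ω) = ∑_{λ∈Λ} c_λ ω^λ, with the same c_λ for all ω. Then for every j ∈ [0, p-1] with j ∉ Λ, we have φ_j(1) = 0. -/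
open Polynomial Finset

/-- Lemma 1: if f(q) = ∑_{i=0}^{p-1} q^i φ_i(q^p) and at every p-th root of unity ω,
f(ω) = ∑_{λ∈Λ} c_λ ω^λ with Λ a set of residues of generalized pentagonal numbers
mod p containing 0, then φ_j(1) = 0 whenever j ∉ Λ. -/
theorem phi_one_eq_zero (p : ℕ) (hp : p.Prime)
    (f : Polynomial ℤ) (φ : ℕ → Polynomial ℤ)
    (hf : f = ∑ i ∈ Finset.range p, X ^ i * (φ i).comp (X ^ p))
    (Λ : Finset ℕ) (hΛ : Λ ⊆ Finset.range p) (h0Λ : 0 ∈ Λ)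
    (hpent : ∀ l ∈ Λ, ∃ m : ℤ, m * (3 * m - 1) / 2 ≡ (l : ℤ) [ZMOD p])
    (c : ℕ → ℤ)
    (hval : ∀ ω : ℂ, ω ^ p = 1 →
      (f.map (Int.castRingHom ℂ)).eval ω = ∑ l ∈ Λ, (c l : ℂ) * ω ^ l) :
    ∀ j, j ≤ p - 1 → j ∉ Λ → (φ j).eval 1 = 0 := by
  intro j hj hjΛ
  have hp0 : 0 < p := hp.pos
  have hjp : j < p := lt_of_le_of_lt hj (Nat.pred_lt hp.ne_zero |>.trans_le le_rfl)
  -- the auxiliary polynomial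
  set g : Polynomial ℂ :=
    ∑ i ∈ Finset.range p,
      C ((((φ i).eval (1:ℤ) : ℤ) : ℂ) - if i ∈ Λ then (c i : ℂ) else 0) * X ^ i with hg
  have hgeval : ∀ ω : ℂ, ω ^ p = 1 → g.eval ω = 0 := by
    intro ω hω
    have h1 : (f.map (Int.castRingHom ℂ)).eval ω
        = ∑ i ∈ Finset.range p, (((φ i).eval (1:ℤ) : ℤ) : ℂ) * ω ^ i := by
      rw [hf]
      simp only [Polynomial.map_sum, Polynomial.map_mul, Polynomial.map_pow,
        Polynomial.map_comp, eval_finset_sum, eval_mul, eval_pow, map_X, eval_comp,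
        eval_pow, eval_X, hω]
      refine Finset.sum_congr rfl fun i _ => ?_
      rw [mul_comm]
      congr 1
      rw [eval_map]
      simp [eval₂_at_one]
    have h2 : (∑ l ∈ Λ, (c l : ℂ) * ω ^ l)
        = ∑ i ∈ Finset.range p, (if i ∈ Λ then (c i : ℂ) else 0) * ω ^ i := by
      rw [← Finset.sum_subset hΛ (fun x _ hx => by simp [hx])]
      exact Finset.sum_congr rfl fun i hi => by rw [if_pos hi]
    have := hval ω hω
    rw [h1, h2] at this
    simp only [hg, eval_finset_sum, eval_mul, eval_C, eval_pow, eval_X, sub_mul]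
    rw [Finset.sum_sub_distrib, this, sub_self]
  -- g vanishes at the p distinct p-th roots of unity, and has degree < p, so g = 0
  have hprim : IsPrimitiveRoot (Complex.exp (2 * Real.pi * Complex.I / p)) p :=
    Complex.isPrimitiveRoot_exp p hp.ne_zero
  have hg0 : g = 0 := by
    apply Polynomial.eq_zero_of_natDegree_lt_card_of_eval_eq_zero' g
      (Polynomial.nthRootsFinset p (1 : ℂ))
    · intro ω hω
      exact hgeval ω ((Polynomial.mem_nthRootsFinset hp0 (1 : ℂ)).mp hω)
    · rw [hprim.card_nthRootsFinset]
      calc g.natDegree ≤ p - 1 := by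
            apply Polynomial.natDegree_sum_le_of_forall_le
            intro i hi
            apply (Polynomial.natDegree_C_mul_le _ _).trans
            simp only [natDegree_X_pow]
            exact Nat.le_sub_one_of_lt (Finset.mem_range.mp hi)
        _ < p := Nat.pred_lt hp.ne_zero
  have hcoeff : g.coeff j = (((φ j).eval (1:ℤ) : ℤ) : ℂ) - (if j ∈ Λ then (c j : ℂ) else 0) := by
    rw [hg, Polynomial.finset_sum_coeff]
    rw [Finset.sum_eq_single j]
    · rw [coeff_C_mul, coeff_X_pow, if_pos rfl, mul_one]
    · intro i _ hij
      rw [coeff_C_mul, coeff_X_pow, if_neg (Ne.symm hij), mul_zero]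
    · intro h; exact absurd (Finset.mem_range.mpr hjp) h
  rw [hg0] at hcoeff
  simp only [coeff_zero, if_neg hjΛ, sub_zero] at hcoeff
  exact_mod_cast hcoeff.symm
end
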